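/- Let W : ℝ → ℝ be a 1-periodic, even, Lipschitz function with Lipschitz constant 1, let γ > 0 and T > 0, and let p ∈ ℤ and q ∈ ℕ with q ≠ 0. Then there exists an initial datum y₀ and an orbit (y_i) of the linearized scheme with parameter T such that y_{kq+i} = y_i + k·p for all i, k ∈ ℕ, if and only if f_γ(T) = −p/q. -/

import Mathlib

/-- An orbit of the linearized minimizing-movement scheme with parameter `T` and
spatial/temporal ratio `γ`: each `y (i+1)` is a global minimizer over `ℝ` of
`t ↦ T * t + W t + γ / 2 * (t - y i) ^ 2`. -/
def IsOrbit (W : ℝ → ℝ) (γ T : ℝ) (y : ℕ → ℝ) : Prop :=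
  ∀ i : ℕ, ∀ t : ℝ,
    T * y (i + 1) + W (y (i + 1)) + γ / 2 * (y (i + 1) - y i) ^ 2 ≤
      T * t + W t + γ / 2 * (t - y i) ^ 2

section Helpers
open Filter Set


namespace Stmt11Aux

/-! ### The set of global minimizers -/

def Mins (W : ℝ → ℝ) (γ T x : ℝ) : Set ℝ :=
  {m | ∀ t : ℝ, T * m + W m + γ / 2 * (m - x) ^ 2 ≤ T * t + W t + γ / 2 * (t - x) ^ 2}

variable {W : ℝ → ℝ} {γ T : ℝ}

lemma contF (hlip : LipschitzWith 1 W) (x : ℝ) :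
    Continuous fun t : ℝ => T * t + W t + γ / 2 * (t - x) ^ 2 := by
  have := hlip.continuous
  continuity

lemma wlb (hlip : LipschitzWith 1 W) (x t : ℝ) : W x - |t - x| ≤ W t := by
  have h := hlip.dist_le_mul x t
  rw [Real.dist_eq, Real.dist_eq, abs_sub_comm x t] at h
  push_cast at h
  rw [one_mul] at h
  have h3 : W x - W t ≤ |W x - W t| := le_abs_self _
  linarith

lemma Flb (hlip : LipschitzWith 1 W) (x t : ℝ) :
    T * x + W x - (|T| + 1) * |t - x| + γ / 2 * (t - x) ^ 2
      ≤ T * t + W t + γ / 2 * (t - x) ^ 2 := by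
  have h1 := wlb hlip x t
  have h2 : T * x - T * t ≤ |T| * |t - x| := by
    have e : T * x - T * t = T * (x - t) := by ring
    rw [e]
    calc T * (x - t) ≤ |T * (x - t)| := le_abs_self _
    _ = |T| * |t - x| := by rw [abs_mul, abs_sub_comm x t]
  nlinarith

lemma mins_nonempty (hlip : LipschitzWith 1 W) (hγ : 0 < γ) (x : ℝ) :
    (Mins W γ T x).Nonempty := by
  set R : ℝ := 2 * (|T| + 1) / γ with hR
  have hRpos : 0 < R := by positivity
  obtain ⟨m, hmIcc, hmin⟩ :=
    (isCompact_Icc (a := x - R) (b := x + R)).exists_isMinOn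
      (f := fun t : ℝ => T * t + W t + γ / 2 * (t - x) ^ 2)
      ⟨x, by constructor <;> linarith⟩ ((contF hlip x).continuousOn)
  refine ⟨m, fun t => ?_⟩
  by_cases ht : t ∈ Icc (x - R) (x + R)
  · exact hmin ht
  · have hxm : T * m + W m + γ / 2 * (m - x) ^ 2 ≤ T * x + W x + γ / 2 * (x - x) ^ 2 :=
      hmin ⟨by linarith, by linarith⟩
    have hu : R < |t - x| := by
      rw [mem_Icc, not_and_or] at ht
      rcases ht with h | h <;> push_neg at h
      · rw [abs_of_neg (show t - x < 0 by linarith)]; linarith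
      · rw [abs_of_pos (show 0 < t - x by linarith)]; linarith
    have key := Flb (T := T) (γ := γ) hlip x t
    have hRval : γ / 2 * R = |T| + 1 := by rw [hR]; field_simp
    have h5 : (|T| + 1) * |t - x| ≤ γ / 2 * (t - x) ^ 2 := by
      have hsq : (t - x) ^ 2 = |t - x| ^ 2 := (sq_abs _).symm
      rw [hsq, ← hRval]
      have h0 : (0:ℝ) ≤ |t - x| := abs_nonneg _
      nlinarith [mul_nonneg (mul_nonneg (le_of_lt (half_pos hγ))
        (show (0:ℝ) ≤ |t - x| - R by linarith)) h0]
    calc T * m + W m + γ / 2 * (m - x) ^ 2 ≤ T * x + W x := by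
          have hz : (x - x) ^ 2 = 0 := by ring
          rw [hz] at hxm; linarith
    _ ≤ T * t + W t + γ / 2 * (t - x) ^ 2 := by linarith

lemma mins_subset (hlip : LipschitzWith 1 W) (hγ : 0 < γ) (x : ℝ) :
    Mins W γ T x ⊆ Icc (x - 2 * (|T| + 1) / γ) (x + 2 * (|T| + 1) / γ) := by
  intro m hm
  set R : ℝ := 2 * (|T| + 1) / γ with hR
  have hRpos : 0 < R := by positivity
  have key := Flb (T := T) (γ := γ) hlip x m
  have h0 := hm x
  have hxx : (x - x) ^ 2 = 0 := by ring
  rw [hxx] at h0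
  have hq : γ / 2 * (m - x) ^ 2 ≤ (|T| + 1) * |m - x| := by linarith
  have hu : |m - x| ≤ R := by
    by_contra hc; push_neg at hc
    have h1 : (m - x) ^ 2 = |m - x| ^ 2 := (sq_abs _).symm
    rw [h1] at hq
    have hRval : γ / 2 * R = |T| + 1 := by rw [hR]; field_simp
    nlinarith [mul_pos (mul_pos (half_pos hγ) (sub_pos.2 hc)) (lt_of_le_of_lt hRpos.le hc)]
  rcases abs_le.1 hu with ⟨ha, hb⟩
  constructor <;> linarith

lemma mins_isClosed (hlip : LipschitzWith 1 W) (x : ℝ) : IsClosed (Mins W γ T x) := by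
  have h : Mins W γ T x = ⋂ t : ℝ,
      {m : ℝ | T * m + W m + γ / 2 * (m - x) ^ 2 ≤ T * t + W t + γ / 2 * (t - x) ^ 2} := by
    ext m; simp [Mins, Set.mem_iInter]
  rw [h]
  exact isClosed_iInter fun t => isClosed_le (contF hlip x) continuous_const

lemma mins_order (hγ : 0 < γ) {x x' m m' : ℝ} (hm : m ∈ Mins W γ T x)
    (hm' : m' ∈ Mins W γ T x') (hxx : x < x') : m ≤ m' := by
  by_contra hc
  push_neg at hc
  have h1 := hm m'
  have h2 := hm' m
  nlinarith [mul_pos hγ (mul_pos (sub_pos.2 hc) (sub_pos.2 hxx))]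

lemma mins_translate (hper : Function.Periodic W 1) {x m : ℝ} (n : ℤ)
    (hm : m ∈ Mins W γ T x) : m + n ∈ Mins W γ T (x + n) := by
  intro t
  have h := hm (t - n)
  have wn : ∀ s : ℝ, W (s + (n : ℝ)) = W s := fun s => by
    simpa using (hper.int_mul n) s
  have e1 : W (m + (n : ℝ)) = W m := wn m
  have e2 : W (t - (n : ℝ)) = W t := by
    have h' := wn (t - (n : ℝ)); rw [sub_add_cancel] at h'; exact h'.symm
  rw [e1]
  rw [e2] at h
  convert add_le_add_right h (T * (n : ℝ)) using 1 <;> ring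

lemma mins_closedGraph (hlip : LipschitzWith 1 W) {x m : ℝ} {u v : ℕ → ℝ}
    (hu : Tendsto u atTop (nhds x)) (hv : Tendsto v atTop (nhds m))
    (hmem : ∀ k, v k ∈ Mins W γ T (u k)) : m ∈ Mins W γ T x := by
  intro t
  have hW := hlip.continuous
  have hL : Tendsto (fun k => T * v k + W (v k) + γ / 2 * (v k - u k) ^ 2) atTop
      (nhds (T * m + W m + γ / 2 * (m - x) ^ 2)) := by
    apply Tendsto.add
    apply Tendsto.add
    · exact hv.const_mul T
    · exact (hW.tendsto m).comp hv
    · exact ((hv.sub hu).pow 2).const_mul _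
  have hR : Tendsto (fun k => T * t + W t + γ / 2 * (t - u k) ^ 2) atTop
      (nhds (T * t + W t + γ / 2 * (t - x) ^ 2)) := by
    apply Tendsto.add tendsto_const_nhds
    exact ((tendsto_const_nhds.sub hu).pow 2).const_mul _
  exact le_of_tendsto_of_tendsto' hL hR fun k => hmem k t

/-! ### Order-theoretic helpers -/

lemma tarski {a : ℝ → ℝ} (ha : Monotone a) {c d : ℝ} (hcd : c ≤ d)
    (hc : c ≤ a c) (hd : a d ≤ d) : ∃ x, a x = x := by
  set S : Set ℝ := {x | x ∈ Icc c d ∧ x ≤ a x} with hS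
  have hne : S.Nonempty := ⟨c, ⟨⟨le_refl c, hcd⟩, hc⟩⟩
  have hbdd : BddAbove S := ⟨d, fun x hx => hx.1.2⟩
  set x0 := sSup S with hx0
  have hx0d : x0 ≤ d := csSup_le hne fun x hx => hx.1.2
  have hx0c : c ≤ x0 := le_csSup hbdd ⟨⟨le_refl c, hcd⟩, hc⟩
  have step1 : x0 ≤ a x0 := csSup_le hne fun x hx => hx.2.trans (ha (le_csSup hbdd hx))
  have step2 : a x0 ∈ S := ⟨⟨hx0c.trans step1, (ha hx0d).trans hd⟩, ha step1⟩
  exact ⟨x0, le_antisymm (le_csSup hbdd step2) step1⟩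

lemma mono_subseq {w : ℕ → ℝ} {x : ℝ} (hx : Tendsto w atTop (nhds x))
    (hlt : ∀ k, w k < x) :
    ∃ ψ : ℕ → ℕ, StrictMono ψ ∧ Monotone (w ∘ ψ) := by
  have H : ∀ m : ℕ, ∃ n : ℕ, m + 1 ≤ n ∧ w m < w n := by
    intro m
    have hev : ∀ᶠ n in atTop, w m < w n := hx.eventually (eventually_gt_nhds (hlt m))
    rcases (hev.and (eventually_ge_atTop (m + 1))).exists with ⟨n, hn1, hn2⟩
    exact ⟨n, hn2, hn1⟩
  set f : ℕ → ℕ := fun k => Nat.rec 0 (fun _ prev => (H prev).choose) k with hf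
  have hfs : ∀ k, f (k + 1) = (H (f k)).choose := fun k => rfl
  have h1 : ∀ k, f k < f (k + 1) := by
    intro k; rw [hfs]; have := (H (f k)).choose_spec.1; omega
  have h2 : ∀ k, w (f k) ≤ w (f (k + 1)) := by
    intro k; rw [hfs]; exact ((H (f k)).choose_spec.2).le
  exact ⟨f, strictMono_nat_of_lt_succ h1, monotone_nat_of_le_succ h2⟩

/-! ### The key dynamical lemma -/

lemma chain_of_gt (M : ℝ → Set ℝ) (g : ℝ → ℝ) (p : ℤ) (q : ℕ) (a : ℝ → ℝ)
    (hadef : ∀ x, a x = g^[q] x - p)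
    (hmem : ∀ x, g x ∈ M x) (hmono : Monotone g)
    (hgt : ∀ (x : ℝ) (n : ℤ), g (x + n) = g x + n)
    (hgraph : ∀ (x m : ℝ) (u v : ℕ → ℝ), Tendsto u atTop (nhds x) →
      Tendsto v atTop (nhds m) → (∀ k, v k ∈ M (u k)) → m ∈ M x)
    (hrota : Tendsto (fun n : ℕ => a^[n] 0 / n) atTop (nhds 0))
    (hdn : ∀ d : ℝ, d < a d) :
    ∃ z : ℕ → ℝ, (∀ i, z (i + 1) ∈ M (z i)) ∧ z q = z 0 + p := by
  have hmonoi : ∀ i : ℕ, Monotone (g^[i]) := fun i => hmono.iterate i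
  have hamono : Monotone a := fun x y hxy => by
    rw [hadef, hadef]; exact sub_le_sub_right (hmonoi q hxy) _
  have hgit : ∀ (i : ℕ) (x : ℝ) (n : ℤ), g^[i] (x + n) = g^[i] x + n := by
    intro i
    induction i with
    | zero => intro x n; simp
    | succ i ih =>
      intro x n
      rw [Function.iterate_succ_apply, hgt, Function.iterate_succ_apply, ih]
  have hat : ∀ (x : ℝ) (n : ℤ), a (x + n) = a x + n := by
    intro x n; rw [hadef, hadef, hgit]; ring
  have hper' : ∀ x : ℝ, a x - x = a (Int.fract x) - Int.fract x := by
    intro x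
    have hx : x = Int.fract x + (⌊x⌋ : ℤ) := by
      rw [add_comm]; exact (Int.floor_add_fract x).symm
    calc a x - x = a (Int.fract x + (⌊x⌋ : ℤ)) - (Int.fract x + (⌊x⌋ : ℤ)) := by rw [← hx]
    _ = a (Int.fract x) - Int.fract x := by rw [hat]; ring
  have hne : ((fun x => a x - x) '' Icc 0 1).Nonempty :=
    ⟨a 0 - 0, ⟨0, ⟨le_refl 0, zero_le_one⟩, rfl⟩⟩
  have hbdd : BddBelow ((fun x => a x - x) '' Icc 0 1) := by
    refine ⟨0, ?_⟩; rintro y ⟨x, hx, rfl⟩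
    show (0:ℝ) ≤ a x - x
    linarith [hdn x]
  set δ := sInf ((fun x => a x - x) '' Icc 0 1) with hδ
  have hlb : ∀ x : ℝ, δ ≤ a x - x := by
    intro x
    rw [hper' x]
    exact csInf_le hbdd ⟨Int.fract x, ⟨Int.fract_nonneg x, (Int.fract_lt_one x).le⟩, rfl⟩
  by_cases hpos : 0 < δ
  · exfalso
    have iter : ∀ n : ℕ, (n : ℝ) * δ ≤ a^[n] 0 := by
      intro n
      induction n with
      | zero => simp
      | succ n ih =>
        rw [Function.iterate_succ_apply']
        have := hlb (a^[n] 0)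
        push_cast
        nlinarith
    have hge : δ ≤ (0 : ℝ) := by
      refine ge_of_tendsto hrota ?_
      filter_upwards [eventually_ge_atTop 1] with n hn
      have hn' : (0 : ℝ) < n := by exact_mod_cast hn
      rw [le_div_iff₀ hn']
      calc δ * n = (n : ℝ) * δ := by ring
      _ ≤ a^[n] 0 := iter n
    linarith
  · have hδ0 : δ = 0 := by
      refine le_antisymm (not_lt.1 hpos) (le_csInf hne ?_)
      rintro y ⟨x, hx, rfl⟩
      show (0:ℝ) ≤ a x - x
      linarith [hdn x]
    have hseq : ∀ n : ℕ, ∃ x ∈ Icc (0 : ℝ) 1, a x - x < 1 / ((n : ℝ) + 1) := by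
      intro n
      have hlt : δ < 1 / ((n : ℝ) + 1) := by rw [hδ0]; positivity
      rcases exists_lt_of_csInf_lt hne hlt with ⟨y, ⟨x, hx, rfl⟩, hy⟩
      exact ⟨x, hx, hy⟩
    choose u hu1 hu2 using hseq
    obtain ⟨xstar, hxstar, φ, hφ, hconv⟩ := isCompact_Icc.tendsto_subseq hu1
    have hgap : Tendsto (fun k => a (u (φ k)) - u (φ k)) atTop (nhds 0) := by
      refine tendsto_of_tendsto_of_tendsto_of_le_of_le (f := fun k => a (u (φ k)) - u (φ k))
        tendsto_const_nhds tendsto_one_div_add_atTop_nhds_zero_nat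
        (fun k => (sub_pos.2 (hdn (u (φ k)))).le) (fun k => ?_)
      have h1 := hu2 (φ k)
      have h2 : 1 / ((φ k : ℝ) + 1) ≤ 1 / ((k : ℝ) + 1) := by
        apply one_div_le_one_div_of_le (by positivity)
        have hkk : k ≤ φ k := hφ.le_apply
        have : (k : ℝ) ≤ (φ k : ℝ) := by exact_mod_cast hkk
        linarith
      linarith
    have hau : Tendsto (fun k => a (u (φ k))) atTop (nhds xstar) := by
      have h := hgap.add hconv
      rw [zero_add] at h
      refine h.congr fun k => ?_
      simp [Function.comp, sub_add_cancel]
    by_cases hfreq : ∃ᶠ k in atTop, xstar ≤ u (φ k)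
    · exfalso
      have hge : a xstar ≤ xstar := by
        by_contra hcon; push_neg at hcon
        have hev : ∀ᶠ k in atTop, a (u (φ k)) < a xstar :=
          hau.eventually (eventually_lt_nhds hcon)
        rcases (hfreq.and_eventually hev).exists with ⟨k, h1, h2⟩
        exact absurd (hamono h1) (not_le.2 h2)
      linarith [hdn xstar]
    · have hev : ∀ᶠ k in atTop, u (φ k) < xstar := by
        rw [not_frequently] at hfreq
        filter_upwards [hfreq] with k hk
        exact not_le.1 hk
      rcases eventually_atTop.1 hev with ⟨N, hN⟩
      set w : ℕ → ℝ := fun k => u (φ (k + N)) with hw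
      have hwlt : ∀ k, w k < xstar := fun k => hN _ (Nat.le_add_left N k)
      have hwconv : Tendsto w atTop (nhds xstar) :=
        hconv.comp (tendsto_add_atTop_nat N)
      have hwgap : Tendsto (fun k => a (w k) - w k) atTop (nhds 0) :=
        hgap.comp (tendsto_add_atTop_nat N)
      obtain ⟨ψ, hψs, hψm⟩ := mono_subseq hwconv hwlt
      set t : ℕ → ℝ := fun k => w (ψ k) with hts
      have htlt : ∀ k, t k < xstar := fun k => hwlt (ψ k)
      have htconv : Tendsto t atTop (nhds xstar) := hwconv.comp hψs.tendsto_atTop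
      have htgap : Tendsto (fun k => a (t k) - t k) atTop (nhds 0) :=
        hwgap.comp hψs.tendsto_atTop
      have htmono : Monotone t := hψm
      have hbddi : ∀ i : ℕ, BddAbove (range fun k => g^[i] (t k)) := fun i =>
        ⟨g^[i] xstar, by rintro y ⟨k, rfl⟩; exact hmonoi i (htlt k).le⟩
      set z : ℕ → ℝ := fun i => ⨆ k, g^[i] (t k) with hz
      have hzt : ∀ i, Tendsto (fun k => g^[i] (t k)) atTop (nhds (z i)) := fun i =>
        tendsto_atTop_ciSup (fun k l hkl => hmonoi i (htmono hkl)) (hbddi i)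
      have hz0 : z 0 = xstar := by
        refine tendsto_nhds_unique ?_ htconv
        simpa using hzt 0
      have hchain : ∀ i, z (i + 1) ∈ M (z i) := fun i =>
        hgraph _ _ _ _ (hzt i) (hzt (i + 1))
          (fun k => by rw [Function.iterate_succ_apply']; exact hmem _)
      have hzq : z q = xstar + p := by
        refine tendsto_nhds_unique (hzt q) ?_
        have heq : (fun k => g^[q] (t k)) = fun k => (a (t k) - t k) + t k + p := by
          funext k; rw [hadef]; ring
        rw [heq]
        have h := (htgap.add htconv).add (tendsto_const_nhds (x := (p : ℝ)))
        simpa using h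
      exact ⟨z, hchain, by rw [hzq, hz0]⟩

lemma exists_periodic_chain (M : ℝ → Set ℝ) (g : ℝ → ℝ) (p : ℤ) (q : ℕ) (a : ℝ → ℝ)
    (hadef : ∀ x, a x = g^[q] x - p)
    (hmem : ∀ x, g x ∈ M x) (hmono : Monotone g)
    (hgt : ∀ (x : ℝ) (n : ℤ), g (x + n) = g x + n)
    (hgraph : ∀ (x m : ℝ) (u v : ℕ → ℝ), Tendsto u atTop (nhds x) →
      Tendsto v atTop (nhds m) → (∀ k, v k ∈ M (u k)) → m ∈ M x)
    (hrota : Tendsto (fun n : ℕ => a^[n] 0 / n) atTop (nhds 0)) :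
    ∃ z : ℕ → ℝ, (∀ i, z (i + 1) ∈ M (z i)) ∧ z q = z 0 + p := by
  have hmonoi : ∀ i : ℕ, Monotone (g^[i]) := fun i => hmono.iterate i
  have hamono : Monotone a := fun x y hxy => by
    rw [hadef, hadef]; exact sub_le_sub_right (hmonoi q hxy) _
  have hgit : ∀ (i : ℕ) (x : ℝ) (n : ℤ), g^[i] (x + n) = g^[i] x + n := by
    intro i
    induction i with
    | zero => intro x n; simp
    | succ i ih =>
      intro x n
      rw [Function.iterate_succ_apply, hgt, Function.iterate_succ_apply, ih]
  have hat : ∀ (x : ℝ) (n : ℤ), a (x + n) = a x + n := by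
    intro x n; rw [hadef, hadef, hgit]; ring
  by_cases hup : ∃ c : ℝ, c ≤ a c
  · by_cases hdn : ∃ d : ℝ, a d ≤ d
    · obtain ⟨c, hc⟩ := hup
      obtain ⟨d', hd'⟩ := hdn
      set d : ℝ := d' + (⌈c - d'⌉ : ℤ) with hdd
      have hd : a d ≤ d := by rw [hdd, hat]; exact add_le_add_left hd' _
      have hcd : c ≤ d := by
        have := Int.le_ceil (c - d')
        rw [hdd]; linarith
      obtain ⟨x0, hx0⟩ := tarski hamono hcd hc hd
      refine ⟨fun i => g^[i] x0, fun i => ?_, ?_⟩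
      · show g^[i+1] x0 ∈ M (g^[i] x0)
        rw [Function.iterate_succ_apply']; exact hmem _
      · have h : g^[q] x0 = x0 + p := by
          have h := hx0; rw [hadef] at h; linarith
        simpa using h
    · push_neg at hdn
      exact chain_of_gt M g p q a hadef hmem hmono hgt hgraph hrota hdn
  · push_neg at hup
    set N : ℝ → Set ℝ := fun x => {m | -m ∈ M (-x)} with hN
    set g' : ℝ → ℝ := fun x => -g (-x) with hg'
    set a' : ℝ → ℝ := fun x => -a (-x) with ha'
    have hg'it : ∀ (i : ℕ) (x : ℝ), g'^[i] x = -(g^[i] (-x)) := by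
      intro i
      induction i with
      | zero => intro x; simp
      | succ i ih =>
        intro x
        rw [Function.iterate_succ_apply, Function.iterate_succ_apply, ih]
        simp [hg']
    have ha'it : ∀ (n : ℕ) (x : ℝ), a'^[n] x = -(a^[n] (-x)) := by
      intro n
      induction n with
      | zero => intro x; simp
      | succ n ih =>
        intro x
        rw [Function.iterate_succ_apply, Function.iterate_succ_apply, ih]
        simp [ha']
    have hadef' : ∀ x, a' x = g'^[q] x - ((-p : ℤ) : ℝ) := by
      intro x
      simp only [ha', hg'it, hadef]
      push_cast; ring
    have hmem' : ∀ x, g' x ∈ N x := by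
      intro x
      show -(-g (-x)) ∈ M (-x)
      rw [neg_neg]; exact hmem _
    have hmono' : Monotone g' := fun x y hxy => by
      simp only [hg']
      exact neg_le_neg (hmono (neg_le_neg hxy))
    have hgt' : ∀ (x : ℝ) (n : ℤ), g' (x + n) = g' x + n := by
      intro x n
      simp only [hg']
      have h : -(x + (n : ℝ)) = -x + ((-n : ℤ) : ℝ) := by push_cast; ring
      rw [h, hgt]
      push_cast; ring
    have hgraph' : ∀ (x m : ℝ) (u v : ℕ → ℝ), Tendsto u atTop (nhds x) →
        Tendsto v atTop (nhds m) → (∀ k, v k ∈ N (u k)) → m ∈ N x := by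
      intro x m u v hu hv hm
      show -m ∈ M (-x)
      exact hgraph (-x) (-m) (fun k => -(u k)) (fun k => -(v k)) hu.neg hv.neg hm
    have hrota' : Tendsto (fun n : ℕ => a'^[n] 0 / n) atTop (nhds 0) := by
      have h := hrota.neg
      rw [neg_zero] at h
      refine h.congr fun n => ?_
      rw [ha'it]
      simp [neg_div]
    have hdn' : ∀ d : ℝ, d < a' d := by
      intro d
      have := hup (-d)
      simp only [ha']
      linarith
    obtain ⟨z, hchain, hzq⟩ :=
      chain_of_gt N g' (-p) q a' hadef' hmem' hmono' hgt' hgraph' hrota' hdn'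
    refine ⟨fun i => -(z i), fun i => hchain i, ?_⟩
    have h : z q = z 0 + ((-p : ℤ) : ℝ) := hzq
    push_cast at h
    simp only
    linarith

lemma mins_spec {x m : ℝ} (hm : m ∈ Mins W γ T x) (t : ℝ) :
    T * m + W m + γ / 2 * (m - x) ^ 2 ≤ T * t + W t + γ / 2 * (t - x) ^ 2 := hm t

end Stmt11Aux

end Helpers

open Filter Set in
theorem stmt_11 (W : ℝ → ℝ) (hper : Function.Periodic W 1) (heven : ∀ x : ℝ, W (-x) = W x)
    (hlip : LipschitzWith 1 W)
    (γ : ℝ) (hγ : 0 < γ) (T : ℝ) (hT : 0 < T)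
    (fγ : ℝ → ℝ)
    (hfγ : ∀ T' : ℝ, ∀ y : ℕ → ℝ, IsOrbit W γ T' y →
      Filter.Tendsto (fun i : ℕ => (y 0 - y i) / (i : ℝ)) Filter.atTop (nhds (fγ T')))
    (p : ℤ) (q : ℕ) (hq : q ≠ 0) :
    (∃ y : ℕ → ℝ, IsOrbit W γ T y ∧
      ∀ i k : ℕ, y (k * q + i) = y i + (k : ℝ) * (p : ℝ)) ↔
    fγ T = -((p : ℝ) / (q : ℝ)) := by
  classical
  have hqpos : 0 < q := Nat.pos_of_ne_zero hq
  have hq0' : (q : ℝ) ≠ 0 := Nat.cast_ne_zero.2 hq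
  have hmul : Tendsto (fun n : ℕ => n * q) atTop atTop :=
    tendsto_atTop_mono (fun n => Nat.le_mul_of_pos_right n hqpos) tendsto_id
  constructor
  · rintro ⟨y, horb, hpy⟩
    have hten := hfγ T y horb
    have hcomp := hten.comp hmul
    refine tendsto_nhds_unique (hcomp.congr' ?_) tendsto_const_nhds
    filter_upwards [eventually_ge_atTop 1] with k hk
    have hy := hpy 0 k
    rw [Nat.add_zero] at hy
    have hk0 : (k : ℝ) ≠ 0 := Nat.cast_ne_zero.2 (by omega)
    simp only [Function.comp_apply]
    rw [hy]
    push_cast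
    field_simp
    ring
  · intro hfT
    -- the minimizer selection
    set g : ℝ → ℝ := fun x => sInf (Stmt11Aux.Mins W γ T x) with hgdef
    have hMbdd : ∀ x : ℝ, BddBelow (Stmt11Aux.Mins W γ T x) := fun x =>
      ⟨x - 2 * (|T| + 1) / γ, fun m hm => (Stmt11Aux.mins_subset hlip hγ x hm).1⟩
    have hgmem : ∀ x, g x ∈ Stmt11Aux.Mins W γ T x := fun x =>
      (Stmt11Aux.mins_isClosed hlip x).csInf_mem (Stmt11Aux.mins_nonempty hlip hγ x) (hMbdd x)
    have hgmono : Monotone g := by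
      intro x y hxy
      rcases eq_or_lt_of_le hxy with rfl | hlt
      · exact le_refl _
      · exact Stmt11Aux.mins_order hγ (hgmem x) (hgmem y) hlt
    have hgt : ∀ (x : ℝ) (n : ℤ), g (x + n) = g x + n := by
      intro x n
      apply le_antisymm
      · exact csInf_le (hMbdd _) (Stmt11Aux.mins_translate hper n (hgmem x))
      · have h1 := Stmt11Aux.mins_translate hper (-n) (hgmem (x + n))
        have e : x + (n : ℝ) + ((-n : ℤ) : ℝ) = x := by push_cast; ring
        rw [e] at h1
        have h2 := csInf_le (hMbdd x) h1
        push_cast at h2 ⊢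
        linarith
    have hgit : ∀ (i : ℕ) (x : ℝ) (n : ℤ), g^[i] (x + n) = g^[i] x + n := by
      intro i
      induction i with
      | zero => intro x n; simp
      | succ i ih =>
        intro x n
        rw [Function.iterate_succ_apply, hgt, Function.iterate_succ_apply, ih]
    -- orbits generated by g
    have horbg : ∀ x0 : ℝ, IsOrbit W γ T (fun i => g^[i] x0) := by
      intro x0 i t
      have h := Stmt11Aux.mins_spec (hgmem (g^[i] x0)) t
      simpa [Function.iterate_succ_apply'] using h
    -- rotation number computation
    set a : ℝ → ℝ := fun x => g^[q] x - p with hadf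
    have hadef : ∀ x, a x = g^[q] x - p := fun _ => rfl
    have haiter : ∀ n : ℕ, a^[n] 0 = g^[n * q] 0 - (n : ℝ) * p := by
      intro n
      induction n with
      | zero => simp
      | succ n ih =>
        rw [Function.iterate_succ_apply', ih, hadef]
        have e : g^[n * q] 0 - (n : ℝ) * p = g^[n * q] 0 + ((-(n * p) : ℤ) : ℝ) := by
          push_cast; ring
        rw [e, hgit q]
        rw [show (n + 1) * q = q + n * q from by ring, Function.iterate_add_apply]
        push_cast; ring
    have hten := hfγ T _ (horbg 0)
    rw [hfT] at hten
    have hcomp := hten.comp hmul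
    have hrota : Tendsto (fun n : ℕ => a^[n] 0 / n) atTop (nhds 0) := by
      have h2 := (hcomp.const_mul (-(q : ℝ))).sub_const (p : ℝ)
      have hval : -(q : ℝ) * -((p : ℝ) / q) - p = 0 := by field_simp; ring
      rw [hval] at h2
      refine h2.congr' ?_
      filter_upwards [eventually_ge_atTop 1] with n hn
      have hn0 : (n : ℝ) ≠ 0 := Nat.cast_ne_zero.2 (by omega)
      simp only [Function.comp_apply, Function.iterate_zero, id_eq]
      rw [haiter n]
      push_cast
      field_simp
      ring
    obtain ⟨z, hchain, hzq⟩ := Stmt11Aux.exists_periodic_chain (Stmt11Aux.Mins W γ T) g p q a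
      hadef hgmem hgmono hgt
      (fun x m u v hu hv hm => Stmt11Aux.mins_closedGraph hlip hu hv hm) hrota
    refine ⟨fun i => z (i % q) + ((i / q : ℕ) : ℝ) * p, ?_, ?_⟩
    · intro i t
      have key : z ((i + 1) % q) + (((i + 1) / q : ℕ) : ℝ) * p ∈
          Stmt11Aux.Mins W γ T (z (i % q) + ((i / q : ℕ) : ℝ) * p) := by
        have hi : i % q + i / q * q = i := Nat.mod_add_div' i q
        rcases Nat.lt_or_ge (i % q + 1) q with hlt | hge
        · have hi1 : i + 1 = (i % q + 1) + (i / q) * q := by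
            conv_lhs => rw [← hi]
            ring
          have e1 : (i + 1) % q = i % q + 1 := by
            rw [hi1, Nat.add_mul_mod_self_right, Nat.mod_eq_of_lt hlt]
          have e2 : (i + 1) / q = i / q := by
            rw [hi1, Nat.add_mul_div_right _ _ hqpos, Nat.div_eq_of_lt hlt, zero_add]
          rw [e1, e2]
          have htr := Stmt11Aux.mins_translate hper ((i / q : ℕ) * p) (hchain (i % q))
          have e4 : ∀ (x : ℝ) (m : ℕ), x + (((m : ℤ) * p : ℤ) : ℝ) = x + (m : ℝ) * p :=
            fun x m => by push_cast; ring
          rw [e4 _ (i / q), e4 _ (i / q)] at htr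
          exact htr
        · have hmod : i % q < q := Nat.mod_lt i hqpos
          have hq1 : i % q + 1 = q := le_antisymm (Nat.succ_le_of_lt hmod) hge
          have hq9 : i % q = q - 1 := Nat.eq_sub_of_add_eq hq1
          have hi1 : i + 1 = (i / q + 1) * q := by
            have key : ∀ r m : ℕ, r + 1 = q → r + m * q + 1 = (m + 1) * q := by
              intro r m h; rw [← h]; ring
            have h2 := key (i % q) (i / q) hq1
            conv_lhs => rw [← hi]
            exact h2
          have e1 : (i + 1) % q = 0 := by rw [hi1]; exact Nat.mul_mod_left _ _
          have e2 : (i + 1) / q = i / q + 1 := by rw [hi1]; exact Nat.mul_div_cancel _ hqpos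
          rw [e1, e2, hq9]
          have hstep : z 0 + (p : ℝ) ∈ Stmt11Aux.Mins W γ T (z (q - 1)) := by
            have h := hchain (q - 1)
            rw [show q - 1 + 1 = q from Nat.succ_pred_eq_of_pos hqpos, hzq] at h
            exact h
          have htr := Stmt11Aux.mins_translate hper ((i / q : ℕ) * p) hstep
          have e4 : ∀ m : ℕ, z 0 + (p : ℝ) + (((m : ℤ) * p : ℤ) : ℝ)
              = z 0 + ((m + 1 : ℕ) : ℝ) * p := fun m => by push_cast; ring
          have e5 : ∀ m : ℕ, z (q - 1) + (((m : ℤ) * p : ℤ) : ℝ)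
              = z (q - 1) + (m : ℝ) * p := fun m => by push_cast; ring
          rw [e4 (i / q), e5 (i / q)] at htr
          exact htr
      exact Stmt11Aux.mins_spec key t
    · intro i k
      have e1 : (k * q + i) % q = i % q := by rw [Nat.add_comm, Nat.add_mul_mod_self_right]
      have e2 : (k * q + i) / q = i / q + k := by
        rw [Nat.add_comm, Nat.add_mul_div_right _ _ hqpos]
      simp only
      rw [e1, e2]
      push_cast
      ring
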